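/- Let u : ℝⁿ → ℝ be Lipschitz with constant L and fix x ∈ ℝⁿ. Then the function h(v) := ∫ u(x+z) dμ_v(z), defined on the sphere {v ∈ ℝⁿ : ‖v‖ = ε}, is continuous; moreover there is a constant C depending only on the dimension n such that |h(v₁) − h(v₂)| ≤ C·L·‖v₁ − v₂‖ for all v₁, v₂ with ‖v₁‖ = ‖v₂‖ = ε. -/

import Mathlib

open MeasureTheory Metric Filter Set
open scoped RealInnerProductSpace ENNReal NNReal Topology Classical

noncomputable section

abbrev E (n : ℕ) : Type := EuclideanSpace ℝ (Fin n)

/-- The closed `(n-1)`-dimensional disk of radius `ε` orthogonal to `v`. -/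
def diskSet (n : ℕ) (ε : ℝ) (v : E n) : Set (E n) :=
  {z | ⟪z, v⟫ = 0 ∧ ‖z‖ ≤ ε}

/-- The uniform probability measure on `diskSet n ε v`: the `(n-1)`-dimensional
Hausdorff measure restricted to the disk, normalized to total mass 1. -/
def diskMeasure (n : ℕ) (ε : ℝ) (v : E n) : Measure (E n) :=
  (μH[(n : ℝ) - 1] (diskSet n ε v))⁻¹ • μH[(n : ℝ) - 1].restrict (diskSet n ε v)

/-- `Wfun n ε α β u x v = α u(x+v) + β ∫ u(x+z) dμ_v(z)`. -/
def Wfun (n : ℕ) (ε α β : ℝ) (u : E n → ℝ) (x v : E n) : ℝ :=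
  α * u (x + v) + β * ∫ z, u (x + z) ∂(diskMeasure n ε v)

section Aux
variable {n : ℕ} {ε : ℝ}

lemma isClosed_diskSet (v : E n) : IsClosed (diskSet n ε v) := by
  have h1 : IsClosed {z : E n | ⟪z, v⟫ = 0} :=
    isClosed_eq (Continuous.inner continuous_id continuous_const) continuous_const
  have h2 : IsClosed {z : E n | ‖z‖ ≤ ε} := isClosed_le continuous_norm continuous_const
  exact h1.inter h2

lemma isCompact_diskSet (v : E n) : IsCompact (diskSet n ε v) := by
  refine Metric.isCompact_of_isClosed_isBounded (isClosed_diskSet v) ?_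
  refine (Metric.isBounded_closedBall (x := (0 : E n)) (r := ε)).subset ?_
  intro z hz
  simpa [Metric.mem_closedBall] using hz.2

lemma measurableSet_diskSet (v : E n) : MeasurableSet (diskSet n ε v) :=
  (isClosed_diskSet v).measurableSet

lemma diskSet_preimage (R : E n ≃ₗᵢ[ℝ] E n) {v₁ v₂ : E n} (h : R v₁ = v₂) :
    (R : E n → E n) ⁻¹' (diskSet n ε v₂) = diskSet n ε v₁ := by
  ext z
  simp only [diskSet, mem_preimage, mem_setOf_eq, ← h, LinearIsometryEquiv.norm_map]
  rw [LinearIsometryEquiv.inner_map_map]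

lemma map_diskMeasure (R : E n ≃ₗᵢ[ℝ] E n) {v₁ v₂ : E n} (h : R v₁ = v₂) :
    diskMeasure n ε v₂ = (diskMeasure n ε v₁).map R := by
  have hiso : Isometry (R : E n → E n) := R.isometry
  have hsurj : Function.Surjective (R : E n → E n) := R.surjective
  have hmap : (μH[(n : ℝ) - 1] : Measure (E n)).map R = μH[(n : ℝ) - 1] := by
    rw [hiso.map_hausdorffMeasure (Or.inr hsurj), hsurj.range_eq, Measure.restrict_univ]
  have hset := diskSet_preimage (ε := ε) R h
  have hμs : μH[(n : ℝ) - 1] (diskSet n ε v₂) = μH[(n : ℝ) - 1] (diskSet n ε v₁) := by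
    rw [← hset, hiso.hausdorffMeasure_preimage (Or.inr hsurj), hsurj.range_eq, inter_univ]
  rw [diskMeasure, diskMeasure, hμs, Measure.map_smul]
  congr 1
  rw [← hset, ← Measure.restrict_map hiso.continuous.measurable (measurableSet_diskSet v₂), hmap]

lemma diskMeasure_univ_le (v : E n) : diskMeasure n ε v Set.univ ≤ 1 := by
  rw [diskMeasure, Measure.smul_apply, Measure.restrict_apply MeasurableSet.univ, univ_inter,
    smul_eq_mul]
  set a := μH[(n : ℝ) - 1] (diskSet n ε v)
  rcases eq_or_ne a 0 with h | h
  · simp [h]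
  rcases eq_or_ne a ∞ with h' | h'
  · simp [h']
  · rw [ENNReal.inv_mul_cancel h h']

instance (n : ℕ) (ε : ℝ) (v : E n) : IsFiniteMeasure (diskMeasure n ε v) :=
  ⟨lt_of_le_of_lt (diskMeasure_univ_le v) ENNReal.one_lt_top⟩

lemma integrable_diskMeasure {f : E n → ℝ} (hf : Continuous f) (v : E n) :
    Integrable f (diskMeasure n ε v) := by
  set s := diskSet n ε v with hs
  set a := μH[(n : ℝ) - 1] s with ha
  rcases eq_or_ne a 0 with h0 | h0
  · have : diskMeasure n ε v = 0 := by
      rw [diskMeasure, Measure.restrict_eq_zero.mpr h0, smul_zero]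
    rw [this]; exact integrable_zero_measure
  rcases eq_or_ne a ∞ with htop | htop
  · have : diskMeasure n ε v = 0 := by
      rw [diskMeasure, ← hs, ← ha, htop, ENNReal.inv_top, zero_smul]
    rw [this]; exact integrable_zero_measure
  · obtain ⟨M, hM⟩ := (isCompact_diskSet v).exists_bound_of_continuousOn hf.continuousOn
    have hint : IntegrableOn f s μH[(n : ℝ) - 1] :=
      Measure.integrableOn_of_bounded htop hf.aestronglyMeasurable
        (((ae_restrict_iff' (measurableSet_diskSet v)).mpr (ae_of_all _ hM)))
    exact hint.smul_measure (ENNReal.inv_ne_top.mpr h0)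

end Aux


set_option maxHeartbeats 1000000
section Rot
variable {n : ℕ} {ε : ℝ}

lemma refl_formula (a z : E n) :
    (Submodule.reflection (ℝ ∙ a)ᗮ z : E n) = z - ((2 * ⟪a, z⟫) / ‖a‖ ^ 2) • a := by
  rw [Submodule.reflection_apply, Submodule.starProjection_orthogonal_val, Submodule.starProjection_singleton]
  simp only [RCLike.ofReal_real_eq_id, id_eq]
  match_scalars <;> ring

lemma refl_formula_unit {a p : E n} {t : ℝ} (ht : t ≠ 0) (hp : ‖p‖ = 1) (hab : a = t • p)
    (z : E n) : (Submodule.reflection (ℝ ∙ a)ᗮ z : E n) = z - (2 * ⟪p, z⟫) • p := by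
  subst hab
  rw [refl_formula]
  congr 1
  have ht' : |t| ≠ 0 := abs_ne_zero.mpr ht
  rw [real_inner_smul_left, norm_smul, Real.norm_eq_abs, hp, mul_one, sq_abs]
  match_scalars
  field_simp

lemma proj_diff_bound {p q : E n} (hp : ‖p‖ = 1) (hq : ‖q‖ = 1) (z : E n) :
    ‖(2 * ⟪q, z⟫) • q - (2 * ⟪p, z⟫) • p‖ ≤ 4 * ‖q - p‖ * ‖z‖ := by
  have hid : (2 * ⟪q, z⟫) • q - (2 * ⟪p, z⟫) • p
      = (2 * ⟪q - p, z⟫) • q + (2 * ⟪p, z⟫) • (q - p) := by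
    rw [inner_sub_left]
    module
  rw [hid]
  have h1 : ‖(2 * ⟪q - p, z⟫) • q‖ ≤ 2 * (‖q - p‖ * ‖z‖) := by
    rw [norm_smul, Real.norm_eq_abs, abs_mul, hq, mul_one, abs_two]
    have := abs_real_inner_le_norm (q - p) z
    nlinarith
  have h2 : ‖(2 * ⟪p, z⟫) • (q - p)‖ ≤ 2 * (‖z‖ * ‖q - p‖) := by
    rw [norm_smul, Real.norm_eq_abs, abs_mul, abs_two]
    have h3 := abs_real_inner_le_norm p z
    rw [hp, one_mul] at h3
    nlinarith [norm_nonneg (q - p), abs_nonneg ⟪p, z⟫]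
  calc ‖(2 * ⟪q - p, z⟫) • q + (2 * ⟪p, z⟫) • (q - p)‖
      ≤ ‖(2 * ⟪q - p, z⟫) • q‖ + ‖(2 * ⟪p, z⟫) • (q - p)‖ := norm_add_le _ _
    _ ≤ 4 * ‖q - p‖ * ‖z‖ := by nlinarith

lemma exists_rotation (hε : 0 < ε) {v₁ v₂ : E n} (h1 : ‖v₁‖ = ε) (h2 : ‖v₂‖ = ε) :
    ∃ R : E n ≃ₗᵢ[ℝ] E n, R v₁ = v₂ ∧ ∀ z : E n, ‖z‖ ≤ ε → ‖R z - z‖ ≤ 4 * ‖v₁ - v₂‖ := by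
  rcases le_or_gt ε ‖v₁ - v₂‖ with hbig | hsmall
  · refine ⟨Submodule.reflection (ℝ ∙ (v₁ - v₂))ᗮ, Submodule.reflection_sub (h1.trans h2.symm), fun z hz => ?_⟩
    have hn : ‖(Submodule.reflection (ℝ ∙ (v₁ - v₂))ᗮ : E n ≃ₗᵢ[ℝ] E n) z‖ = ‖z‖ :=
      LinearIsometryEquiv.norm_map _ z
    have h4 := norm_sub_le ((Submodule.reflection (ℝ ∙ (v₁ - v₂))ᗮ : E n ≃ₗᵢ[ℝ] E n) z) z
    have h5 : (0:ℝ) ≤ ‖v₁ - v₂‖ := norm_nonneg _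
    linarith
  · set S₁ : E n ≃ₗᵢ[ℝ] E n := Submodule.reflection (ℝ ∙ (v₁ - -v₁))ᗮ with hS₁def
    set S₂ : E n ≃ₗᵢ[ℝ] E n := Submodule.reflection (ℝ ∙ (-v₁ - v₂))ᗮ with hS₂def
    have hS₁ : S₁ v₁ = -v₁ := Submodule.reflection_sub (by rw [norm_neg])
    have hS₂ : S₂ (-v₁) = v₂ := Submodule.reflection_sub (by rw [norm_neg, h1, h2])
    refine ⟨S₁.trans S₂, by rw [LinearIsometryEquiv.trans_apply, hS₁, hS₂], fun z hz => ?_⟩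
    set d := ‖v₁ - v₂‖ with hd
    have hd0 : 0 ≤ d := norm_nonneg _
    set m := v₁ + v₂ with hm
    have hm2 : ‖m‖ ^ 2 = 4 * ε ^ 2 - d ^ 2 := by
      have ha := norm_add_sq_real v₁ v₂
      have hb := norm_sub_sq_real v₁ v₂
      rw [h1, h2] at ha hb
      rw [hm, hd]
      nlinarith
    have hmpos : 0 < ‖m‖ := by nlinarith [norm_nonneg m]
    have hmle : ‖m‖ ≤ 2 * ε := by nlinarith [norm_nonneg m]
    set p : E n := ε⁻¹ • v₁ with hp'
    set q : E n := ‖m‖⁻¹ • m with hq'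
    have hp : ‖p‖ = 1 := by
      rw [hp', norm_smul, Real.norm_eq_abs, abs_of_pos (inv_pos.mpr hε), h1]
      field_simp
    have hq : ‖q‖ = 1 := by
      rw [hq', norm_smul, Real.norm_eq_abs, abs_of_pos (inv_pos.mpr hmpos)]
      field_simp
    have hqp : ‖q - p‖ ≤ d / ε := by
      have key : q - p = (‖m‖⁻¹ - (2*ε)⁻¹) • m + (2*ε)⁻¹ • (v₂ - v₁) := by
        rw [hq', hp', hm]
        match_scalars <;> field_simp <;> ring
      rw [key]
      have e1 : ‖(‖m‖⁻¹ - (2*ε)⁻¹) • m‖ = (‖m‖⁻¹ - (2*ε)⁻¹) * ‖m‖ := by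
        rw [norm_smul, Real.norm_eq_abs, abs_of_nonneg]
        have : (2*ε)⁻¹ ≤ ‖m‖⁻¹ := by
          apply inv_anti₀ hmpos hmle
        linarith
      have e2 : ‖(2*ε)⁻¹ • (v₂ - v₁)‖ = (2*ε)⁻¹ * d := by
        rw [norm_smul, Real.norm_eq_abs, abs_of_pos (by positivity), hd, norm_sub_rev]
      have e3 : 2 * ε - ‖m‖ ≤ d := by nlinarith
      have h2ε : (0:ℝ) < 2*ε := by positivity
      have t1 : (‖m‖⁻¹ - (2*ε)⁻¹) * ‖m‖ ≤ d / (2*ε) := by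
        have heq : (‖m‖⁻¹ - (2*ε)⁻¹) * ‖m‖ = (2*ε - ‖m‖) / (2*ε) := by
          field_simp
        rw [heq]
        gcongr
      have t2 : (2*ε)⁻¹ * d = d / (2*ε) := by ring
      have hsum : d / (2*ε) + d / (2*ε) = d / ε := by
        field_simp
        ring
      calc ‖(‖m‖⁻¹ - (2*ε)⁻¹) • m + (2*ε)⁻¹ • (v₂ - v₁)‖
          ≤ ‖(‖m‖⁻¹ - (2*ε)⁻¹) • m‖ + ‖(2*ε)⁻¹ • (v₂ - v₁)‖ := norm_add_le _ _
        _ ≤ d / ε := by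
            rw [e1, e2, t2]
            linarith
    have hz1 : S₁ z = z - (2 * ⟪p, z⟫) • p := by
      refine refl_formula_unit (t := 2 * ε) (by positivity) hp ?_ z
      rw [hp']
      match_scalars
      field_simp
      ring
    have hz2 : S₂ z = z - (2 * ⟪q, z⟫) • q := by
      refine refl_formula_unit (t := -‖m‖) (by nlinarith) hq ?_ z
      rw [hq', hm]
      match_scalars <;> simp <;> exact (mul_inv_cancel₀ (hmpos.ne' : ‖v₁ + v₂‖ ≠ 0)).symm
    have hRz : (S₁.trans S₂) z - z = S₂ (S₁ z - S₂ z) := by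
      rw [LinearIsometryEquiv.trans_apply, map_sub]
      have : S₂ (S₂ z) = z := Submodule.reflection_reflection _ z
      rw [this]
    rw [hRz, LinearIsometryEquiv.norm_map]
    have hdiff : S₁ z - S₂ z = (2 * ⟪q, z⟫) • q - (2 * ⟪p, z⟫) • p := by
      rw [hz1, hz2]
      abel
    rw [hdiff]
    have := proj_diff_bound hp hq z
    have hε' : ε ≠ 0 := hε.ne'
    calc ‖(2 * ⟪q, z⟫) • q - (2 * ⟪p, z⟫) • p‖ ≤ 4 * ‖q - p‖ * ‖z‖ := this
      _ ≤ 4 * d := by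
          have h0 : 0 ≤ ‖q - p‖ := norm_nonneg _
          have h0' : 0 ≤ ‖z‖ := norm_nonneg _
          have : ‖q - p‖ * ‖z‖ ≤ (d / ε) * ε := by
            apply mul_le_mul hqp hz h0' (by positivity)
          rw [div_mul_cancel₀ _ hε'] at this
          linarith
end Rot


lemma key_est {n : ℕ} {ε : ℝ} (hε : 0 < ε) {u : E n → ℝ} {L : ℝ≥0} (hu : LipschitzWith L u)
    (x : E n) {v₁ v₂ : E n} (h1 : ‖v₁‖ = ε) (h2 : ‖v₂‖ = ε) :
    |(∫ z, u (x + z) ∂(diskMeasure n ε v₁)) - ∫ z, u (x + z) ∂(diskMeasure n ε v₂)|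
      ≤ 4 * L * ‖v₁ - v₂‖ := by
  obtain ⟨R, hR, hRz⟩ := exists_rotation hε h1 h2
  have hucont : Continuous u := hu.continuous
  have hmap := map_diskMeasure (ε := ε) R hR
  have h2int : ∫ z, u (x + z) ∂(diskMeasure n ε v₂)
      = ∫ z, u (x + R z) ∂(diskMeasure n ε v₁) := by
    rw [hmap]
    exact integral_map R.continuous.measurable.aemeasurable
      (Continuous.aestronglyMeasurable (by fun_prop))
  have hi1 : Integrable (fun z => u (x + z)) (diskMeasure n ε v₁) :=
    integrable_diskMeasure (hucont.comp (continuous_const.add continuous_id)) v₁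
  have hi2 : Integrable (fun z => u (x + R z)) (diskMeasure n ε v₁) :=
    integrable_diskMeasure (hucont.comp (continuous_const.add R.continuous)) v₁
  rw [h2int, ← integral_sub hi1 hi2]
  have hae : ∀ᵐ z ∂(diskMeasure n ε v₁),
      ‖u (x + z) - u (x + R z)‖ ≤ (L : ℝ) * (4 * ‖v₁ - v₂‖) := by
    have hmem : ∀ᵐ z ∂(diskMeasure n ε v₁), z ∈ diskSet n ε v₁ := by
      rw [diskMeasure]
      exact Measure.ae_smul_measure (ae_restrict_mem (measurableSet_diskSet v₁)) _
    filter_upwards [hmem] with z hz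
    have hd : dist (x + z) (x + R z) = ‖R z - z‖ := by
      rw [dist_eq_norm, show (x + z) - (x + R z) = -(R z - z) by abel, norm_neg]
    calc ‖u (x + z) - u (x + R z)‖ = dist (u (x + z)) (u (x + R z)) := (dist_eq_norm _ _).symm
      _ ≤ L * dist (x + z) (x + R z) := hu.dist_le_mul _ _
      _ = L * ‖R z - z‖ := by rw [hd]
      _ ≤ (L : ℝ) * (4 * ‖v₁ - v₂‖) :=
          mul_le_mul_of_nonneg_left (hRz z hz.2) L.coe_nonneg
  have hbound := norm_integral_le_of_norm_le_const hae
  have hμ : ((diskMeasure n ε v₁) Set.univ).toReal ≤ 1 := by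
    calc ((diskMeasure n ε v₁) Set.univ).toReal
        ≤ (1 : ℝ≥0∞).toReal := ENNReal.toReal_mono ENNReal.one_ne_top (diskMeasure_univ_le v₁)
      _ = 1 := ENNReal.toReal_one
  rw [Real.norm_eq_abs, measureReal_def] at hbound
  have hnn : 0 ≤ (L : ℝ) * (4 * ‖v₁ - v₂‖) := by positivity
  nlinarith [ENNReal.toReal_nonneg (a := (diskMeasure n ε v₁) Set.univ)]

theorem stmt_8 (n : ℕ) (hn : 2 ≤ n) :
    ∃ C : ℝ, ∀ ε : ℝ, 0 < ε → ∀ (u : E n → ℝ) (L : ℝ≥0), LipschitzWith L u →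
      ∀ x : E n,
        ContinuousOn (fun v => ∫ z, u (x + z) ∂(diskMeasure n ε v))
          (sphere (0 : E n) ε) ∧
        ∀ v₁ ∈ sphere (0 : E n) ε, ∀ v₂ ∈ sphere (0 : E n) ε,
          |(∫ z, u (x + z) ∂(diskMeasure n ε v₁)) -
              ∫ z, u (x + z) ∂(diskMeasure n ε v₂)| ≤
            C * L * ‖v₁ - v₂‖ := by
  refine ⟨4, fun ε hε u L hu x => ?_⟩
  have key : ∀ v₁ ∈ sphere (0 : E n) ε, ∀ v₂ ∈ sphere (0 : E n) ε,
      |(∫ z, u (x + z) ∂(diskMeasure n ε v₁)) - ∫ z, u (x + z) ∂(diskMeasure n ε v₂)|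
        ≤ 4 * L * ‖v₁ - v₂‖ := by
    intro v₁ hv₁ v₂ hv₂
    exact key_est hε hu x (by simpa using hv₁) (by simpa using hv₂)
  refine ⟨?_, key⟩
  have hlip : LipschitzOnWith (4 * L) (fun v => ∫ z, u (x + z) ∂(diskMeasure n ε v))
      (sphere (0 : E n) ε) := by
    apply LipschitzOnWith.of_dist_le_mul
    intro v₁ hv₁ v₂ hv₂
    rw [Real.dist_eq, dist_eq_norm]
    have h := key v₁ hv₁ v₂ hv₂
    push_cast
    linarith
  exact hlip.continuousOn
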